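/- With notation as in the Levi form computation for ρ(z,w) = Σₖ ‖w_{(k)}‖^{2pₖ} - e^{-μ‖z‖²} at a boundary point (z₀,w₀) with all w_{(k)0} ≠ 0, for every tangent vector T = (ζ, η_{(1)},…,η_{(l)}) in the complex tangent space the Levi form satisfies L_ρ(T,T) ≥ μ e^{-μ‖z₀‖²} ‖ζ‖², and in particular L_ρ(T,T) > 0 whenever ζ ≠ 0. -/
import Mathlib


open MeasureTheory Real ComplexInnerProductSpace

/-- The Levi form of the defining function
`ρ(z,w) = Σₖ ‖w_{(k)}‖^{2pₖ} - e^{-μ‖z‖²}` at a point `(z₀,w₀)`, evaluated on a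
tangent vector `T = (ζ, η)`. -/
noncomputable def leviForm (n₀ l : ℕ) (n : Fin l → ℕ) (p : Fin l → ℝ) (μ : ℝ)
    (z₀ : EuclideanSpace ℂ (Fin n₀)) (w₀ : (i : Fin l) → EuclideanSpace ℂ (Fin (n i)))
    (ζ : EuclideanSpace ℂ (Fin n₀)) (η : (i : Fin l) → EuclideanSpace ℂ (Fin (n i))) : ℝ :=
  (∑ k, p k * (p k - 1) * ‖w₀ k‖ ^ (2 * (p k - 2)) * ‖⟪w₀ k, η k⟫‖ ^ 2)
    + (∑ k, p k * ‖w₀ k‖ ^ (2 * (p k - 1)) * ‖η k‖ ^ 2)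
    + μ * Real.exp (-μ * ‖z₀‖ ^ 2) * ‖ζ‖ ^ 2
    - μ ^ 2 * Real.exp (-μ * ‖z₀‖ ^ 2) * ‖⟪z₀, ζ⟫‖ ^ 2

/-- The key Levi form estimate: at a boundary point `(z₀,w₀)` with all blocks
`w_{(k)0} ≠ 0`, every complex tangent vector `T = (ζ,η)` satisfies
`L_ρ(T,T) ≥ μ e^{-μ‖z₀‖²} ‖ζ‖²`; in particular `L_ρ(T,T) > 0` whenever `ζ ≠ 0`. -/
theorem leviForm_lower_bound
    (n₀ l : ℕ) (n : Fin l → ℕ) (hn : ∀ i, 0 < n i) (p : Fin l → ℝ) (hp : ∀ i, 0 < p i)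
    (μ : ℝ) (hμ : 0 < μ)
    (z₀ : EuclideanSpace ℂ (Fin n₀)) (w₀ : (i : Fin l) → EuclideanSpace ℂ (Fin (n i)))
    (hw₀ : ∀ k, w₀ k ≠ 0)
    (hbd : ∑ k, ‖w₀ k‖ ^ (2 * p k) = Real.exp (-μ * ‖z₀‖ ^ 2))
    (ζ : EuclideanSpace ℂ (Fin n₀)) (η : (i : Fin l) → EuclideanSpace ℂ (Fin (n i)))
    (htan : ∑ k, ((p k * ‖w₀ k‖ ^ (2 * (p k - 1)) : ℝ) : ℂ) * ⟪w₀ k, η k⟫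
      + ((μ * Real.exp (-μ * ‖z₀‖ ^ 2) : ℝ) : ℂ) * ⟪z₀, ζ⟫ = 0) :
    μ * Real.exp (-μ * ‖z₀‖ ^ 2) * ‖ζ‖ ^ 2 ≤ leviForm n₀ l n p μ z₀ w₀ ζ η ∧
      (ζ ≠ 0 → 0 < leviForm n₀ l n p μ z₀ w₀ ζ η) := by
  unfold leviForm
  set e := Real.exp (-μ * ‖z₀‖ ^ 2) with he
  have hepos : (0:ℝ) < e := Real.exp_pos _
  have hwpos : ∀ k, (0:ℝ) < ‖w₀ k‖ := fun k => norm_pos_iff.mpr (hw₀ k)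
  have hc : ∀ k, (0:ℝ) ≤ p k * ‖w₀ k‖ ^ (2 * (p k - 1)) := fun k =>
    mul_nonneg (hp k).le (Real.rpow_nonneg (norm_nonneg _) _)
  have h1 : ((μ * e : ℝ) : ℂ) * ⟪z₀, ζ⟫
      = - ∑ k, ((p k * ‖w₀ k‖ ^ (2 * (p k - 1)) : ℝ) : ℂ) * ⟪w₀ k, η k⟫ := by
    linear_combination htan
  have expadd : ∀ k, ‖w₀ k‖ ^ (2 * (p k - 1))
      = ‖w₀ k‖ ^ (p k - 2) * ‖w₀ k‖ ^ (p k) := fun k => by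
    rw [← Real.rpow_add (hwpos k)]; congr 1; ring
  have h2 : μ * e * ‖⟪z₀, ζ⟫‖
      ≤ ∑ k, (p k * ‖w₀ k‖ ^ (p k - 2) * ‖⟪w₀ k, η k⟫‖) * (‖w₀ k‖ ^ (p k)) := by
    calc μ * e * ‖⟪z₀, ζ⟫‖ = ‖((μ * e : ℝ) : ℂ) * ⟪z₀, ζ⟫‖ := by
            rw [norm_mul, Complex.norm_real, Real.norm_eq_abs, abs_of_pos (by positivity)]
      _ = ‖∑ k, ((p k * ‖w₀ k‖ ^ (2 * (p k - 1)) : ℝ) : ℂ) * ⟪w₀ k, η k⟫‖ := by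
            rw [h1, norm_neg]
      _ ≤ ∑ k, ‖((p k * ‖w₀ k‖ ^ (2 * (p k - 1)) : ℝ) : ℂ) * ⟪w₀ k, η k⟫‖ :=
            norm_sum_le _ _
      _ = ∑ k, (p k * ‖w₀ k‖ ^ (p k - 2) * ‖⟪w₀ k, η k⟫‖) * (‖w₀ k‖ ^ (p k)) := by
            refine Finset.sum_congr rfl fun k _ => ?_
            rw [norm_mul, Complex.norm_real, Real.norm_eq_abs, abs_of_nonneg (hc k), expadd k]; ring
  have hG : ∀ k, (‖w₀ k‖ ^ (p k)) ^ 2 = ‖w₀ k‖ ^ (2 * p k) := fun k => by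
    rw [sq, ← Real.rpow_add (hwpos k)]; congr 1; ring
  have hF : ∀ k, (p k * ‖w₀ k‖ ^ (p k - 2) * ‖⟪w₀ k, η k⟫‖) ^ 2
      = p k ^ 2 * ‖w₀ k‖ ^ (2 * (p k - 2)) * ‖⟪w₀ k, η k⟫‖ ^ 2 := fun k => by
    have : ‖w₀ k‖ ^ (2 * (p k - 2)) = ‖w₀ k‖ ^ (p k - 2) * ‖w₀ k‖ ^ (p k - 2) := by
      rw [← Real.rpow_add (hwpos k)]; congr 1; ring
    rw [this]; ring
  have hcs := Finset.sum_mul_sq_le_sq_mul_sq Finset.univ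
    (fun k => p k * ‖w₀ k‖ ^ (p k - 2) * ‖⟪w₀ k, η k⟫‖) (fun k => ‖w₀ k‖ ^ (p k))
  simp only [hF, hG] at hcs
  rw [hbd] at hcs
  have key : μ ^ 2 * e * ‖⟪z₀, ζ⟫‖ ^ 2
      ≤ ∑ k, p k ^ 2 * ‖w₀ k‖ ^ (2 * (p k - 2)) * ‖⟪w₀ k, η k⟫‖ ^ 2 := by
    have h4 : (μ ^ 2 * e * ‖⟪z₀, ζ⟫‖ ^ 2) * e
        ≤ (∑ k, p k ^ 2 * ‖w₀ k‖ ^ (2 * (p k - 2)) * ‖⟪w₀ k, η k⟫‖ ^ 2) * e := by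
      calc (μ ^ 2 * e * ‖⟪z₀, ζ⟫‖ ^ 2) * e = (μ * e * ‖⟪z₀, ζ⟫‖) ^ 2 := by ring
        _ ≤ (∑ k, (p k * ‖w₀ k‖ ^ (p k - 2) * ‖⟪w₀ k, η k⟫‖) * (‖w₀ k‖ ^ (p k))) ^ 2 :=
            pow_le_pow_left₀ (by positivity) h2 2
        _ ≤ _ := hcs
    exact le_of_mul_le_mul_right h4 hepos
  have hterm : ∀ k, p k ^ 2 * ‖w₀ k‖ ^ (2 * (p k - 2)) * ‖⟪w₀ k, η k⟫‖ ^ 2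
      ≤ p k * (p k - 1) * ‖w₀ k‖ ^ (2 * (p k - 2)) * ‖⟪w₀ k, η k⟫‖ ^ 2
        + p k * ‖w₀ k‖ ^ (2 * (p k - 1)) * ‖η k‖ ^ 2 := by
    intro k
    have hex : ‖w₀ k‖ ^ (2 * (p k - 1)) = ‖w₀ k‖ ^ (2 * (p k - 2)) * ‖w₀ k‖ ^ 2 := by
      rw [← Real.rpow_two, ← Real.rpow_add (hwpos k)]; congr 1; ring
    have ht : (0:ℝ) ≤ ‖w₀ k‖ ^ (2 * (p k - 2)) := Real.rpow_nonneg (norm_nonneg _) _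
    have hB : ‖⟪w₀ k, η k⟫‖ ^ 2 ≤ ‖w₀ k‖ ^ 2 * ‖η k‖ ^ 2 := by
      have := norm_inner_le_norm (𝕜 := ℂ) (w₀ k) (η k)
      nlinarith [norm_nonneg (⟪w₀ k, η k⟫ : ℂ), norm_nonneg (w₀ k), norm_nonneg (η k)]
    rw [hex]
    nlinarith [mul_nonneg (mul_nonneg (hp k).le ht) (sub_nonneg.mpr hB)]
  have hsum : ∑ k, p k ^ 2 * ‖w₀ k‖ ^ (2 * (p k - 2)) * ‖⟪w₀ k, η k⟫‖ ^ 2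
      ≤ (∑ k, p k * (p k - 1) * ‖w₀ k‖ ^ (2 * (p k - 2)) * ‖⟪w₀ k, η k⟫‖ ^ 2)
        + (∑ k, p k * ‖w₀ k‖ ^ (2 * (p k - 1)) * ‖η k‖ ^ 2) := by
    rw [← Finset.sum_add_distrib]
    exact Finset.sum_le_sum fun k _ => hterm k
  constructor
  · linarith
  · intro hζ
    have hz : (0:ℝ) < ‖ζ‖ := norm_pos_iff.mpr hζ
    have hpos : 0 < μ * e * ‖ζ‖ ^ 2 := by positivity
    linarith
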